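/- Multi-step greedy policies guarantee monotonic improvement: for any integer h ≥ 1, any policy π of a finite discounted MDP, and any h-step greedy policy π' ∈ 𝒢_h(V^π), it holds that V^{π'}(s) ≥ V^π(s) for every state s. -/

import Mathlib

open Finset

noncomputable section

section Defs

variable {S A : Type*} [Fintype S] [Fintype A] [Nonempty A]

/-- Validity of a transition kernel: nonnegative rows summing to one. -/
def IsKernel (P : S → A → S → ℝ) : Prop :=
  ∀ s a, (∀ s', 0 ≤ P s a s') ∧ ∑ s', P s a s' = 1

/-- A policy assigns to each state a probability distribution over actions. -/
def IsPolicy (π : S → A → ℝ) : Prop :=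
  ∀ s, π s ∈ stdSimplex ℝ A

/-- The relative interior of the probability simplex over `A`. -/
def relintSimplex (A : Type*) [Fintype A] : Set (A → ℝ) :=
  {p | (∀ a, 0 < p a) ∧ ∑ a, p a = 1}

/-- A policy lying in the relative interior of the policy set. -/
def IsRelintPolicy (π : S → A → ℝ) : Prop :=
  ∀ s, π s ∈ relintSimplex A

/-- Expected Bellman operator `𝒯^π`. -/
def bellman (P : S → A → S → ℝ) (r : S → A → ℝ) (γ : ℝ)
    (π : S → A → ℝ) (V : S → ℝ) : S → ℝ :=
  fun s => ∑ a, π s a * (r s a + γ * ∑ s', P s a s' * V s')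

/-- Bellman optimality operator `𝒯`. -/
def bellmanOpt (P : S → A → S → ℝ) (r : S → A → ℝ) (γ : ℝ) (V : S → ℝ) : S → ℝ :=
  fun s => Finset.univ.sup' Finset.univ_nonempty
    (fun a => r s a + γ * ∑ s', P s a s' * V s')

/-- `h`-step lookahead action-value `Q_h^π`, given the value function `Vπ` of the policy:
`Q_h^π(s,a) = r(s,a) + γ Σ_{s'} P(s'|s,a) (𝒯^{h−1} V^π)(s')`. -/
def Qlook (P : S → A → S → ℝ) (r : S → A → ℝ) (γ : ℝ) (h : ℕ) (Vπ : S → ℝ) :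
    S → A → ℝ :=
  fun s a => r s a + γ * ∑ s', P s a s' * ((bellmanOpt P r γ)^[h - 1] Vπ) s'

/-- Set of `h`-step greedy policies with respect to `V`:
`𝒢_h(V) = {π : 𝒯^π 𝒯^{h−1} V = 𝒯^h V}`. -/
def greedySet (P : S → A → S → ℝ) (r : S → A → ℝ) (γ : ℝ) (h : ℕ) (V : S → ℝ) :
    Set (S → A → ℝ) :=
  {π | IsPolicy π ∧
    bellman P r γ π ((bellmanOpt P r γ)^[h - 1] V) = (bellmanOpt P r γ)^[h] V}

/-- Bregman divergence of a mirror map `φ`: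
`D_φ(p,q) = φ(p) − φ(q) − ⟨∇φ(q), p − q⟩`. -/
def bregman (φ : (A → ℝ) → ℝ) (p q : A → ℝ) : ℝ :=
  φ p - φ q - fderiv ℝ φ q (p - q)

/-- Mirror map of Legendre type (relative to the simplex as domain): strictly convex on the
simplex, differentiable on its relative interior, and essentially smooth (the gradient blows up
along any sequence in the relative interior converging to a boundary point). -/
def IsLegendre (φ : (A → ℝ) → ℝ) : Prop :=
  StrictConvexOn ℝ (stdSimplex ℝ A) φ ∧
  (∀ q ∈ relintSimplex A, DifferentiableAt ℝ φ q) ∧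
  (∀ (q : ℕ → (A → ℝ)) (p : A → ℝ), (∀ n, q n ∈ relintSimplex A) →
    p ∈ stdSimplex ℝ A → p ∉ relintSimplex A →
    Filter.Tendsto q Filter.atTop (nhds p) →
    Filter.Tendsto (fun n => ‖fderiv ℝ φ (q n)‖) Filter.atTop Filter.atTop)

/-- One PMD proximal step with stepsize `η` and action-value `Q`:
for every state `s`, `πk1 s` maximizes `p ↦ η ⟨Q(s,·), p⟩ − D_φ(p, πk(·|s))` over the simplex. -/
def PMDStep (φ : (A → ℝ) → ℝ) (η : ℝ) (Q : S → A → ℝ) (πk πk1 : S → A → ℝ) : Prop :=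
  ∀ s, πk1 s ∈ stdSimplex ℝ A ∧
    ∀ p ∈ stdSimplex ℝ A,
      η * (∑ a, Q s a * p a) - bregman φ p (πk s) ≤
        η * (∑ a, Q s a * πk1 s a) - bregman φ (πk1 s) (πk s)

/-- Set of policies maximizing `π ↦ M^π Q̂` (componentwise over states),
where `(M^π Q)(s) = Σ_a π(a|s) Q(s,a)`. -/
def greedySetQ (Qhat : S → A → ℝ) : Set (S → A → ℝ) :=
  {π | IsPolicy π ∧ ∀ s, ∀ p ∈ stdSimplex ℝ A,
    ∑ a, Qhat s a * p a ≤ ∑ a, Qhat s a * π s a}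

/-- `‖min_{π ∈ G} D_φ(π, πk)‖∞`, the sup norm over states of the componentwise infimum of the
Bregman divergence over a set `G` of policies. -/
def dtil [Nonempty S] (φ : (A → ℝ) → ℝ) (G : Set (S → A → ℝ)) (πk : S → A → ℝ) : ℝ :=
  ⨆ s : S, |⨅ π : G, bregman φ ((π : S → A → ℝ) s) (πk s)|

/-- Sup norm on `ℝ^S`. -/
def supNorm {S : Type*} [Fintype S] [Nonempty S] (V : S → ℝ) : ℝ := ⨆ s : S, |V s|

end Defs

section Aux

variable {S A : Type*} [Fintype S] [Fintype A] [Nonempty A]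

lemma bellman_mono (P : S → A → S → ℝ) (r : S → A → ℝ) {γ : ℝ} (hγ : 0 ≤ γ)
    (hP : IsKernel P) {π : S → A → ℝ} (hπ : IsPolicy π)
    {U V : S → ℝ} (hUV : ∀ s, U s ≤ V s) :
    ∀ s, bellman P r γ π U s ≤ bellman P r γ π V s := by
  intro s
  unfold bellman
  refine Finset.sum_le_sum fun a _ => ?_
  refine mul_le_mul_of_nonneg_left ?_ ((hπ s).1 a)
  refine add_le_add_right (mul_le_mul_of_nonneg_left ?_ hγ) _
  exact Finset.sum_le_sum fun s' _ => mul_le_mul_of_nonneg_left (hUV s') ((hP s a).1 s')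

lemma bellmanOpt_mono (P : S → A → S → ℝ) (r : S → A → ℝ) {γ : ℝ} (hγ : 0 ≤ γ)
    (hP : IsKernel P) {U V : S → ℝ} (hUV : ∀ s, U s ≤ V s) :
    ∀ s, bellmanOpt P r γ U s ≤ bellmanOpt P r γ V s := by
  intro s
  unfold bellmanOpt
  refine Finset.sup'_le _ _ fun a _ => ?_
  refine le_trans ?_ (Finset.le_sup' _ (Finset.mem_univ a))
  refine add_le_add_right (mul_le_mul_of_nonneg_left ?_ hγ) _
  exact Finset.sum_le_sum fun s' _ => mul_le_mul_of_nonneg_left (hUV s') ((hP s a).1 s')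

lemma bellmanOpt_iter_mono (P : S → A → S → ℝ) (r : S → A → ℝ) {γ : ℝ} (hγ : 0 ≤ γ)
    (hP : IsKernel P) (n : ℕ) {U V : S → ℝ} (hUV : ∀ s, U s ≤ V s) :
    ∀ s, (bellmanOpt P r γ)^[n] U s ≤ (bellmanOpt P r γ)^[n] V s := by
  induction n generalizing U V with
  | zero => simpa using hUV
  | succ n ih =>
    intro s
    rw [Function.iterate_succ_apply, Function.iterate_succ_apply]
    exact ih (bellmanOpt_mono P r hγ hP hUV) s

lemma bellman_le_bellmanOpt (P : S → A → S → ℝ) (r : S → A → ℝ) {γ : ℝ}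
    {π : S → A → ℝ} (hπ : IsPolicy π) (V : S → ℝ) :
    ∀ s, bellman P r γ π V s ≤ bellmanOpt P r γ V s := by
  intro s
  unfold bellman bellmanOpt
  calc ∑ a, π s a * (r s a + γ * ∑ s', P s a s' * V s')
      ≤ ∑ a, π s a * (Finset.univ.sup' Finset.univ_nonempty
          (fun a => r s a + γ * ∑ s', P s a s' * V s')) := by
        refine Finset.sum_le_sum fun a _ => ?_
        exact mul_le_mul_of_nonneg_left (Finset.le_sup' (fun a => r s a + γ * ∑ s', P s a s' * V s') (Finset.mem_univ a)) ((hπ s).1 a)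
    _ = _ := by rw [← Finset.sum_mul, (hπ s).2, one_mul]

lemma bellman_shift (P : S → A → S → ℝ) (r : S → A → ℝ) (γ d : ℝ)
    (hP : IsKernel P) {π : S → A → ℝ} (hπ : IsPolicy π) (V : S → ℝ) (s : S) :
    bellman P r γ π (fun t => V t + d) s = bellman P r γ π V s + γ * d := by
  unfold bellman
  have h1 : ∀ a, ∑ s', P s a s' * (V s' + d) = (∑ s', P s a s' * V s') + d := by
    intro a
    rw [Finset.sum_congr rfl fun s' _ => mul_add (P s a s') (V s') d,
      Finset.sum_add_distrib, ← Finset.sum_mul, (hP s a).2, one_mul]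
  calc ∑ a, π s a * (r s a + γ * ∑ s', P s a s' * (V s' + d))
      = ∑ a, (π s a * (r s a + γ * ∑ s', P s a s' * V s') + π s a * (γ * d)) := by
        refine Finset.sum_congr rfl fun a _ => ?_
        rw [h1 a]; ring
    _ = _ := by
        rw [Finset.sum_add_distrib, ← Finset.sum_mul, (hπ s).2, one_mul]

/-- If `U ≤ 𝒯^{π'} U` pointwise and `V'` is the fixed point of `𝒯^{π'}`, then `U ≤ V'`. -/
lemma le_fixed_of_le_bellman [Nonempty S] (P : S → A → S → ℝ) (r : S → A → ℝ)
    {γ : ℝ} (hγ0 : 0 ≤ γ) (hγ1 : γ < 1) (hP : IsKernel P)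
    {π' : S → A → ℝ} (hπ' : IsPolicy π') {U V' : S → ℝ}
    (hfix : bellman P r γ π' V' = V') (hU : ∀ s, U s ≤ bellman P r γ π' U s) :
    ∀ s, U s ≤ V' s := by
  set d := Finset.univ.sup' Finset.univ_nonempty (fun s => U s - V' s) with hd
  have hdle : ∀ s, U s - V' s ≤ d := fun s => Finset.le_sup' (fun s => U s - V' s) (Finset.mem_univ s)
  have key : ∀ s, U s - V' s ≤ γ * d := by
    intro s
    have h1 : ∀ t, U t ≤ V' t + d := fun t => by linarith [hdle t]
    have h2 := bellman_mono P r hγ0 hP hπ' h1 s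
    rw [bellman_shift P r γ d hP hπ' V' s, hfix] at h2
    have := hU s
    linarith
  have hdγ : d ≤ γ * d := Finset.sup'_le _ _ fun s _ => key s
  have hd0 : d ≤ 0 := by nlinarith
  intro s
  linarith [hdle s]

end Aux

/-- monotonic improvement of `h`-step greedy policies:
if `π' ∈ 𝒢_h(V^π)` then `V^{π'} ≥ V^π` componentwise. -/
theorem stmt1 {S A : Type*} [Fintype S] [Nonempty S] [Fintype A] [Nonempty A]
    (P : S → A → S → ℝ) (r : S → A → ℝ) (γ : ℝ)
    (hP : IsKernel P) (hr : ∀ s a, 0 ≤ r s a ∧ r s a ≤ 1)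
    (hγ0 : 0 < γ) (hγ1 : γ < 1)
    (h : ℕ) (hh : 1 ≤ h)
    (π π' : S → A → ℝ) (hπ : IsPolicy π)
    (Vπ Vπ' : S → ℝ)
    (hVπ : bellman P r γ π Vπ = Vπ)
    (hVπ' : bellman P r γ π' Vπ' = Vπ')
    (hgreedy : π' ∈ greedySet P r γ h Vπ) :
    ∀ s, Vπ s ≤ Vπ' s := by
  obtain ⟨hπ', heq⟩ := hgreedy
  have hγ0' : (0:ℝ) ≤ γ := le_of_lt hγ0
  set T := bellmanOpt P r γ with hT
  -- Vπ ≤ T Vπ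
  have step1 : ∀ s, Vπ s ≤ T Vπ s := by
    intro s
    calc Vπ s = bellman P r γ π Vπ s := by rw [hVπ]
      _ ≤ T Vπ s := bellman_le_bellmanOpt P r hπ Vπ s
  -- W := T^[h-1] Vπ
  set W := T^[h-1] Vπ with hW
  have hVπW : ∀ s, Vπ s ≤ W s := by
    intro s
    have : ∀ n, ∀ s, Vπ s ≤ T^[n] Vπ s := by
      intro n
      induction n with
      | zero => simp
      | succ n ih =>
        intro s
        refine le_trans (ih s) ?_
        rw [Function.iterate_succ_apply]
        exact bellmanOpt_iter_mono P r hγ0' hP n step1 s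
    exact this (h-1) s
  -- W ≤ 𝒯^{π'} W
  have hWbell : ∀ s, W s ≤ bellman P r γ π' W s := by
    intro s
    have hhh : h - 1 + 1 = h := Nat.succ_pred_eq_of_pos hh
    have : bellman P r γ π' W = T^[h] Vπ := heq
    rw [this, ← hhh, Function.iterate_succ_apply]
    exact bellmanOpt_iter_mono P r hγ0' hP (h-1) step1 s
  intro s
  exact le_trans (hVπW s)
    (le_fixed_of_le_bellman P r hγ0' hγ1 hP hπ' hVπ' hWbell s)
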